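/- Let E be a real inner product space, φ : E → ℝ a convex function, and g : E → E a map such that φ has gradient g z at every point z ∈ E (HasGradientAt φ (g z) z for all z). Then for every k, every z : Fin k → E, and every permutation π of Fin k, ∑_{i} ⟨g (z i), z (π i) − z i⟩ ≤ 0. -/

import Mathlib

open scoped RealInnerProductSpace BigOperators

private lemma gradient_inequality
    {E : Type*} [NormedAddCommGroup E] [InnerProductSpace ℝ E] [CompleteSpace E]
    (φ : E → ℝ) (hφ : ConvexOn ℝ Set.univ φ) {x v : E} (hx : HasGradientAt φ v x)
    (y : E) : φ x + ⟪v, y - x⟫ ≤ φ y := by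
  set c : ℝ → E := fun t => t • (y - x) + x with hc
  have hconv : ConvexOn ℝ Set.univ (φ ∘ c) := by
    have := hφ.comp_affineMap (AffineMap.lineMap x y : ℝ →ᵃ[ℝ] E)
    have heq : (φ ∘ c) = φ ∘ ⇑(AffineMap.lineMap x y : ℝ →ᵃ[ℝ] E) := by
      funext t; simp [hc, AffineMap.lineMap_apply]
    rw [heq]; simpa only [Set.preimage_univ] using this
  have hcd : HasDerivAt c (y - x) 0 := by
    simpa [hc] using ((hasDerivAt_id (0:ℝ)).smul_const (y - x)).add_const x
  have hx' : HasFDerivAt φ (InnerProductSpace.toDual ℝ E v : E →L[ℝ] ℝ) x := hx.hasFDerivAt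
  have hd : HasDerivAt (φ ∘ c) ⟪v, y - x⟫ 0 := by
    have h0 : c 0 = x := by simp [hc]
    have hx'' : HasFDerivAt φ (InnerProductSpace.toDual ℝ E v : E →L[ℝ] ℝ) (c 0) := by
      rw [h0]; exact hx'
    simpa using hx''.comp_hasDerivAt (0:ℝ) hcd
  have hslope := hconv.le_slope_of_hasDerivAt (Set.mem_univ (0:ℝ)) (Set.mem_univ (1:ℝ))
    one_pos hd
  have hc1 : c 1 = y := by simp [hc]
  have hc0 : c 0 = x := by simp [hc]
  simp only [slope_def_field, hc1, hc0, Function.comp] at hslope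
  norm_num at hslope
  linarith

/-- Cyclical monotonicity of the gradient of a convex function (Rockafellar 1966), in
permutation form: key property invoked in the proof of Proposition 2.2(i). -/
theorem gradient_convex_cyclically_monotone
    {E : Type*} [NormedAddCommGroup E] [InnerProductSpace ℝ E] [CompleteSpace E]
    (φ : E → ℝ) (g : E → E)
    (hφ : ConvexOn ℝ Set.univ φ)
    (hg : ∀ z : E, HasGradientAt φ (g z) z) :
    ∀ (k : ℕ) (z : Fin k → E) (π : Equiv.Perm (Fin k)),
      (∑ i, ⟪g (z i), z (π i) - z i⟫) ≤ 0 := by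
  intro k z π
  have h1 : ∀ i, ⟪g (z i), z (π i) - z i⟫ ≤ φ (z (π i)) - φ (z i) := by
    intro i
    have := gradient_inequality φ hφ (hg (z i)) (z (π i))
    linarith
  calc (∑ i, ⟪g (z i), z (π i) - z i⟫) ≤ ∑ i, (φ (z (π i)) - φ (z i)) :=
        Finset.sum_le_sum fun i _ => h1 i
    _ = (∑ i, φ (z (π i))) - ∑ i, φ (z i) := Finset.sum_sub_distrib _ _
    _ = 0 := by rw [Equiv.sum_comp π (fun i => φ (z i))]; ring
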